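/- arXiv:1605.09046 — 5 statements merged into one kernel-verified Lean document; each statement's English description precedes it below -/
import Mathlib

section
/- Let n ≥ 1, let μ, σ ∈ ℝⁿ, let x, y ∈ ℝⁿ, and let g = (g₁,...,gₙ) be a random vector with independent coordinates, where g_i has the Gaussian distribution with mean μ_i and variance σ_i². Then E[cos(⟨g, x⟩) cos(⟨g, y⟩)] + E[sin(⟨g, x⟩) sin(⟨g, y⟩)] = exp(-(1/2) Σ_{i=1}^{n} σ_i² (x_i - y_i)²) · cos(⟨μ, x - y⟩). -/
open MeasureTheory ProbabilityTheory

section Aux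

open Complex Real NNReal ENNReal

lemma gauss_char (m : ℝ) (v : ℝ≥0) (t : ℝ) :
    ∫ x : ℝ, Complex.exp ((x * t : ℝ) * Complex.I) ∂(gaussianReal m v)
      = Complex.exp ((m * t : ℝ) * Complex.I - (v : ℝ) * t ^ 2 / 2) := by
  by_cases hv : v = 0
  · subst hv
    simp [gaussianReal_zero_var, integral_dirac]
  · have hV : (0 : ℝ) < (v : ℝ) := by positivity
    have hVne : ((v : ℝ) : ℂ) ≠ 0 := by exact_mod_cast hV.ne'
    rw [gaussianReal_of_var_ne_zero _ hv]
    have hpdf : gaussianPDF m v = fun x => ((Real.toNNReal (gaussianPDFReal m v x) : ℝ≥0) : ℝ≥0∞) := rfl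
    rw [hpdf]
    rw [integral_withDensity_eq_integral_smul
      ((measurable_gaussianPDFReal m v).real_toNNReal) _]
    have hb : (-(1 / (2 * ((v:ℝ):ℂ)))).re < 0 := by
      rw [show -(1 / (2 * ((v:ℝ):ℂ))) = ((-(1 / (2 * (v:ℝ))) : ℝ) : ℂ) by push_cast; ring]
      rw [Complex.ofReal_re]
      have : 0 < 1 / (2 * (v:ℝ)) := by positivity
      linarith
    have key := integral_cexp_quadratic hb ((m / (v:ℝ) : ℝ) + t * Complex.I)
      ((-(m ^ 2 / (2 * (v:ℝ))) : ℝ))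
    have heq : ∀ x : ℝ, (Real.toNNReal (gaussianPDFReal m v x) : ℝ≥0)
          • Complex.exp ((x * t : ℝ) * Complex.I)
        = ((Real.sqrt (2 * π * v))⁻¹ : ℝ) *
          Complex.exp (-(1 / (2 * ((v:ℝ):ℂ))) * x ^ 2 +
            ((m / (v:ℝ) : ℝ) + t * Complex.I) * x + ((-(m ^ 2 / (2 * (v:ℝ))) : ℝ))) := by
      intro x
      rw [NNReal.smul_def, Real.coe_toNNReal _ (gaussianPDFReal_nonneg m v x), gaussianPDFReal,
        Complex.real_smul]
      push_cast [Complex.ofReal_exp]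
      rw [mul_assoc, ← Complex.exp_add]
      congr 2
      field_simp
      ring
    simp_rw [heq]
    rw [integral_const_mul, key]
    have h0 : (0:ℝ) ≤ 2 * π * v := by positivity
    have h1 : ((π:ℂ) / - -(1 / (2 * ((v:ℝ):ℂ)))) ^ (1/2 : ℂ)
        = ((Real.sqrt (2 * π * v) : ℝ) : ℂ) := by
      rw [show ((π:ℂ) / - -(1 / (2 * ((v:ℝ):ℂ)))) = ((2 * π * (v:ℝ) : ℝ) : ℂ) by
        push_cast; field_simp]
      rw [show (1/2 : ℂ) = ((1/2 : ℝ) : ℂ) by norm_num]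
      rw [← Complex.ofReal_cpow h0, Real.sqrt_eq_rpow]
    have h2 : ((-(m ^ 2 / (2 * (v:ℝ))) : ℝ) : ℂ)
          - (((m / (v:ℝ) : ℝ) : ℂ) + (t:ℂ) * Complex.I) ^ 2 / (4 * -(1 / (2 * ((v:ℝ):ℂ))))
        = ((m * t : ℝ) : ℂ) * Complex.I - ((v:ℝ) : ℂ) * (t:ℂ) ^ 2 / 2 := by
      have hI : Complex.I ^ 2 = -1 := Complex.I_sq
      push_cast
      field_simp
      linear_combination (4*((v:ℝ):ℂ)^2*(t:ℂ)^2) * hI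
    rw [h1, h2]
    have hs : ((Real.sqrt (2 * π * v) : ℝ) : ℂ) ≠ 0 := by
      simp only [ne_eq, Complex.ofReal_eq_zero]
      positivity
    rw [Complex.ofReal_inv, ← mul_assoc, inv_mul_cancel₀ hs, one_mul]

variable {Ω : Type*} [MeasurableSpace Ω] {P : Measure Ω} [IsProbabilityMeasure P]

lemma bdd_integrable {f : Ω → ℝ} (hm : AEStronglyMeasurable f P) (hb : ∀ ω, |f ω| ≤ 1) :
    Integrable f P :=
  Integrable.mono' (integrable_const 1) hm (ae_of_all _ fun ω => by
    simpa [Real.norm_eq_abs] using hb ω)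

lemma bdd_integrable_c {f : Ω → ℂ} (hm : AEStronglyMeasurable f P) (hb : ∀ ω, ‖f ω‖ ≤ 1) :
    Integrable f P :=
  Integrable.mono' (integrable_const 1) hm (ae_of_all _ hb)

lemma indep_integral_mul_c {X Y : Ω → ℂ} (h : IndepFun X Y P)
    (hXm : Measurable X) (hYm : Measurable Y)
    (hXb : ∀ ω, ‖X ω‖ ≤ 1) (hYb : ∀ ω, ‖Y ω‖ ≤ 1) :
    ∫ ω, X ω * Y ω ∂P = (∫ ω, X ω ∂P) * ∫ ω, Y ω ∂P := by
  have hXr : Measurable fun ω => (X ω).re := Complex.measurable_re.comp hXm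
  have hXi : Measurable fun ω => (X ω).im := Complex.measurable_im.comp hXm
  have hYr : Measurable fun ω => (Y ω).re := Complex.measurable_re.comp hYm
  have hYi : Measurable fun ω => (Y ω).im := Complex.measurable_im.comp hYm
  have bXr : ∀ ω, |(X ω).re| ≤ 1 := fun ω => (Complex.abs_re_le_norm _).trans (hXb ω)
  have bXi : ∀ ω, |(X ω).im| ≤ 1 := fun ω => (Complex.abs_im_le_norm _).trans (hXb ω)
  have bYr : ∀ ω, |(Y ω).re| ≤ 1 := fun ω => (Complex.abs_re_le_norm _).trans (hYb ω)
  have bYi : ∀ ω, |(Y ω).im| ≤ 1 := fun ω => (Complex.abs_im_le_norm _).trans (hYb ω)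
  have iXr : Integrable (fun ω => (X ω).re) P := bdd_integrable hXr.aestronglyMeasurable bXr
  have iXi : Integrable (fun ω => (X ω).im) P := bdd_integrable hXi.aestronglyMeasurable bXi
  have iYr : Integrable (fun ω => (Y ω).re) P := bdd_integrable hYr.aestronglyMeasurable bYr
  have iYi : Integrable (fun ω => (Y ω).im) P := bdd_integrable hYi.aestronglyMeasurable bYi
  have iX : Integrable X P := bdd_integrable_c hXm.aestronglyMeasurable hXb
  have iY : Integrable Y P := bdd_integrable_c hYm.aestronglyMeasurable hYb
  have iXY : Integrable (fun ω => X ω * Y ω) P := by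
    refine bdd_integrable_c (hXm.mul hYm).aestronglyMeasurable fun ω => ?_
    calc ‖X ω * Y ω‖ = ‖X ω‖ * ‖Y ω‖ := norm_mul _ _
      _ ≤ 1 * 1 := mul_le_mul (hXb ω) (hYb ω) (norm_nonneg _) zero_le_one
      _ = 1 := one_mul 1
  have hrr : IndepFun (fun ω => (X ω).re) (fun ω => (Y ω).re) P :=
    h.comp Complex.measurable_re Complex.measurable_re
  have hri : IndepFun (fun ω => (X ω).re) (fun ω => (Y ω).im) P :=
    h.comp Complex.measurable_re Complex.measurable_im
  have hir : IndepFun (fun ω => (X ω).im) (fun ω => (Y ω).re) P :=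
    h.comp Complex.measurable_im Complex.measurable_re
  have hii : IndepFun (fun ω => (X ω).im) (fun ω => (Y ω).im) P :=
    h.comp Complex.measurable_im Complex.measurable_im
  rw [← integral_re_add_im iXY, ← integral_re_add_im iX, ← integral_re_add_im iY]
  simp only [RCLike.re_to_complex, RCLike.im_to_complex, RCLike.I_to_complex, Complex.mul_re,
    Complex.mul_im]
  rw [integral_sub ((hrr.integrable_mul iXr iYr).congr ?_) ((hii.integrable_mul iXi iYi).congr ?_),
    integral_add ((hri.integrable_mul iXr iYi).congr ?_) ((hir.integrable_mul iXi iYr).congr ?_)]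
  rotate_left
  · exact ae_of_all _ fun ω => rfl
  · exact ae_of_all _ fun ω => rfl
  · exact ae_of_all _ fun ω => rfl
  · exact ae_of_all _ fun ω => rfl
  rw [hrr.integral_fun_mul_eq_mul_integral hXr.aestronglyMeasurable hYr.aestronglyMeasurable,
    hii.integral_fun_mul_eq_mul_integral hXi.aestronglyMeasurable hYi.aestronglyMeasurable,
    hri.integral_fun_mul_eq_mul_integral hXr.aestronglyMeasurable hYi.aestronglyMeasurable,
    hir.integral_fun_mul_eq_mul_integral hXi.aestronglyMeasurable hYr.aestronglyMeasurable]
  apply Complex.ext <;>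
    simp [Complex.mul_re, Complex.mul_im]

lemma indep_integral_prod_c {n : ℕ} {g : Fin n → Ω → ℝ}
    (hmeas : ∀ i, Measurable (g i))
    (hindep : iIndepFun g P)
    (φ : Fin n → ℝ → ℂ) (hφm : ∀ i, Measurable (φ i)) (hφb : ∀ i t, ‖φ i t‖ ≤ 1)
    (s : Finset (Fin n)) :
    ∫ ω, ∏ i ∈ s, φ i (g i ω) ∂P = ∏ i ∈ s, ∫ ω, φ i (g i ω) ∂P := by
  classical
  induction s using Finset.induction_on with
  | empty => simp
  | @insert a s ha ih =>
    have hF : iIndepFun (fun i => φ i ∘ g i) P :=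
      hindep.comp _ (fun i => hφm i)
    have hFm : ∀ i, Measurable (φ i ∘ g i) := fun i => (hφm i).comp (hmeas i)
    have hind : IndepFun (∏ j ∈ s, (φ j ∘ g j)) (φ a ∘ g a) P :=
      iIndepFun.indepFun_finset_prod_of_notMem hF hFm ha
    have hprodm : Measurable (fun ω => ∏ j ∈ s, φ j (g j ω)) := by
      apply Finset.measurable_prod
      exact fun j _ => hFm j
    have hprodb : ∀ ω, ‖∏ j ∈ s, φ j (g j ω)‖ ≤ 1 := by
      intro ω
      calc ‖∏ j ∈ s, φ j (g j ω)‖ = ∏ j ∈ s, ‖φ j (g j ω)‖ := norm_prod _ _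
        _ ≤ ∏ j ∈ s, 1 := Finset.prod_le_prod (fun j _ => norm_nonneg _)
            (fun j _ => hφb j _)
        _ = 1 := Finset.prod_const_one
    have hfe : (∏ j ∈ s, (φ j ∘ g j)) = fun ω => ∏ j ∈ s, φ j (g j ω) := by
      funext ω; simp [Finset.prod_apply, Function.comp]
    rw [hfe] at hind
    simp only [Finset.prod_insert ha]
    rw [← ih]
    have := indep_integral_mul_c hind.symm (hFm a) hprodm
      (fun ω => hφb a _) hprodb
    calc ∫ ω, φ a (g a ω) * ∏ j ∈ s, φ j (g j ω) ∂P
        = ∫ ω, (φ a ∘ g a) ω * (fun ω => ∏ j ∈ s, φ j (g j ω)) ω ∂P := by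
          simp only [Function.comp]
      _ = (∫ ω, (φ a ∘ g a) ω ∂P) * ∫ ω, (fun ω => ∏ j ∈ s, φ j (g j ω)) ω ∂P := this
      _ = (∫ ω, φ a (g a ω) ∂P) * ∫ ω, ∏ j ∈ s, φ j (g j ω) ∂P := rfl

end Aux

/-- **PNG representation of the (shifted) Gaussian kernel.** If `g = (g₁,...,gₙ)` has
independent coordinates with `gᵢ ~ N(μᵢ, σᵢ²)`, then
`E[cos⟨g,x⟩cos⟨g,y⟩] + E[sin⟨g,x⟩sin⟨g,y⟩]
  = exp(-(1/2) ∑ i, σᵢ² (xᵢ-yᵢ)²) · cos(⟨μ, x-y⟩)`. -/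
theorem stmt4 {Ω : Type*} [MeasurableSpace Ω] (P : Measure Ω) [IsProbabilityMeasure P]
    (n : ℕ) (hn : 1 ≤ n) (μ σ x y : Fin n → ℝ) (g : Fin n → Ω → ℝ)
    (hmeas : ∀ i, Measurable (g i))
    (hindep : iIndepFun g P)
    (hlaw : ∀ i, Measure.map (g i) P = gaussianReal (μ i) (Real.toNNReal ((σ i) ^ 2))) :
    (∫ ω, Real.cos (∑ i, g i ω * x i) * Real.cos (∑ i, g i ω * y i) ∂P) +
      (∫ ω, Real.sin (∑ i, g i ω * x i) * Real.sin (∑ i, g i ω * y i) ∂P) =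
        Real.exp (-(1 / 2) * ∑ i, (σ i) ^ 2 * (x i - y i) ^ 2) *
          Real.cos (∑ i, μ i * (x i - y i)) := by
  classical
  set z : Fin n → ℝ := fun i => x i - y i with hzdef
  have hA : Measurable fun ω => ∑ i, g i ω * x i :=
    Finset.measurable_sum _ fun i _ => (hmeas i).mul_const _
  have hB : Measurable fun ω => ∑ i, g i ω * y i :=
    Finset.measurable_sum _ fun i _ => (hmeas i).mul_const _
  have hS : Measurable fun ω => ∑ i, g i ω * z i :=
    Finset.measurable_sum _ fun i _ => (hmeas i).mul_const _
  have i1 : Integrable (fun ω => Real.cos (∑ i, g i ω * x i) * Real.cos (∑ i, g i ω * y i)) P := by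
    refine bdd_integrable (hA.cos.mul hB.cos).aestronglyMeasurable fun ω => ?_
    rw [abs_mul]
    exact mul_le_one₀ (Real.abs_cos_le_one _) (abs_nonneg _) (Real.abs_cos_le_one _)
  have i2 : Integrable (fun ω => Real.sin (∑ i, g i ω * x i) * Real.sin (∑ i, g i ω * y i)) P := by
    refine bdd_integrable (hA.sin.mul hB.sin).aestronglyMeasurable fun ω => ?_
    rw [abs_mul]
    exact mul_le_one₀ (Real.abs_sin_le_one _) (abs_nonneg _) (Real.abs_sin_le_one _)
  rw [← integral_add i1 i2]
  have hcc : ∀ ω, Real.cos (∑ i, g i ω * x i) * Real.cos (∑ i, g i ω * y i) +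
      Real.sin (∑ i, g i ω * x i) * Real.sin (∑ i, g i ω * y i)
     = Real.cos (∑ i, g i ω * z i) := by
    intro ω
    rw [← Real.cos_sub, ← Finset.sum_sub_distrib]
    congr 1
    exact Finset.sum_congr rfl fun i _ => by simp [hzdef, mul_sub]
  simp_rw [hcc]
  -- the complex exponential function family
  set φ : Fin n → ℝ → ℂ := fun i t => Complex.exp ((t * z i : ℝ) * Complex.I) with hφdef
  have hφm : ∀ i, Measurable (φ i) := by
    intro i
    apply Complex.measurable_exp.comp
    exact (Complex.measurable_ofReal.comp (measurable_id.mul_const _)).mul_const _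
  have hφb : ∀ i t, ‖φ i t‖ ≤ 1 := by
    intro i t
    simp only [hφdef]
    rw [Complex.norm_exp_ofReal_mul_I]
  have hCm : Measurable fun ω => Complex.exp (((∑ i, g i ω * z i : ℝ)) * Complex.I) :=
    Complex.measurable_exp.comp ((Complex.measurable_ofReal.comp hS).mul_const _)
  have hCint : Integrable (fun ω => Complex.exp (((∑ i, g i ω * z i : ℝ)) * Complex.I)) P := by
    refine bdd_integrable_c hCm.aestronglyMeasurable fun ω => ?_
    rw [Complex.norm_exp_ofReal_mul_I]
  -- individual characteristic function values
  have hone : ∀ i, ∫ ω, φ i (g i ω) ∂P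
      = Complex.exp ((μ i * z i : ℝ) * Complex.I - (σ i) ^ 2 * (z i : ℂ) ^ 2 / 2) := by
    intro i
    have : ∫ ω, φ i (g i ω) ∂P = ∫ t, φ i t ∂(Measure.map (g i) P) :=
      (integral_map (hmeas i).aemeasurable (hφm i).aestronglyMeasurable).symm
    rw [this, hlaw i, hφdef]
    have := gauss_char (μ i) (Real.toNNReal ((σ i) ^ 2)) (z i)
    rw [this]
    congr 2
    rw [Real.coe_toNNReal _ (sq_nonneg (σ i))]
    push_cast
    ring
  -- the main complex computation
  have hmain : ∫ ω, Complex.exp (((∑ i, g i ω * z i : ℝ)) * Complex.I) ∂P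
      = Complex.exp (((∑ i, μ i * z i : ℝ)) * Complex.I - ((∑ i, (σ i)^2 * (z i)^2 / 2 : ℝ))) := by
    have hexp : ∀ ω, Complex.exp (((∑ i, g i ω * z i : ℝ)) * Complex.I)
        = ∏ i, φ i (g i ω) := by
      intro ω
      rw [hφdef]
      simp only
      rw [← Complex.exp_sum]
      congr 1
      push_cast
      rw [Finset.sum_mul]
    simp_rw [hexp]
    rw [indep_integral_prod_c hmeas hindep φ hφm hφb Finset.univ]
    simp_rw [hone]
    rw [← Complex.exp_sum]
    congr 1
    rw [Finset.sum_sub_distrib]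
    push_cast
    rw [Finset.sum_mul]
  -- take real parts
  have hre : ∫ ω, Real.cos (∑ i, g i ω * z i) ∂P
      = (∫ ω, Complex.exp (((∑ i, g i ω * z i : ℝ)) * Complex.I) ∂P).re := by
    have h := integral_re hCint (𝕜 := ℂ)
    simp only [RCLike.re_to_complex] at h
    rw [← h]
    exact integral_congr_ae (ae_of_all _ fun ω => (Complex.exp_ofReal_mul_I_re _).symm)
  rw [hre, hmain, sub_eq_add_neg, Complex.exp_add, ← Complex.ofReal_neg, ← Complex.ofReal_exp,
    mul_comm, Complex.re_ofReal_mul, Complex.exp_ofReal_mul_I_re]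
  simp only [hzdef]
  congr 1
  congr 1
  rw [← Finset.sum_div]
  ring
end

section
/- Let n ≥ 1 and let H ∈ ℝ^{n×n} be a matrix all of whose entries satisfy |H_{ij}| ≤ 1/√n. Let D be the random diagonal matrix whose diagonal entries are independent Rademacher random variables. Then for every x ∈ ℝⁿ with ‖x‖₂ = 1, P[‖HDx‖_∞ > log(n)/√n] ≤ 2n·exp(-log²(n)/8). In particular, the matrix HD₁ with H the L₂-normalized Hadamard matrix and D₁ a random diagonal ±1 matrix is (log(n), 2n·e^{-log²(n)/8})-balanced. -/
open MeasureTheory ProbabilityTheory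

lemma rade_integrable_aux {n : ℕ} {Ω : Type*} [MeasurableSpace Ω] (P : Measure Ω)
    (ε : Fin n → Ω → ℝ) (hmeas : ∀ k, Measurable (ε k))
    (hlaw : ∀ k, Measure.map (ε k) P =
      (1 / 2 : ENNReal) • Measure.dirac (1 : ℝ) +
        (1 / 2 : ENNReal) • Measure.dirac (-1 : ℝ))
    (k : Fin n) (g : ℝ → ℝ) (hg : Measurable g) :
    Integrable (fun ω => g (ε k ω)) P ∧
      ∫ ω, g (ε k ω) ∂P = (g 1 + g (-1)) / 2 := by
  have hd : ∀ c : ℝ, Integrable g (Measure.dirac c) :=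
    fun c => (integrable_const (g c)).congr (ae_eq_dirac g).symm
  have h1 : Integrable g ((1 / 2 : ENNReal) • Measure.dirac (1 : ℝ)) :=
    (hd 1).smul_measure (by norm_num)
  have h2 : Integrable g ((1 / 2 : ENNReal) • Measure.dirac (-1 : ℝ)) :=
    (hd (-1)).smul_measure (by norm_num)
  have hmap : Integrable g (Measure.map (ε k) P) := by
    rw [hlaw k]; exact h1.add_measure h2
  constructor
  · exact (integrable_map_measure hg.aestronglyMeasurable (hmeas k).aemeasurable).mp hmap
  · rw [← integral_map (hmeas k).aemeasurable hg.aestronglyMeasurable, hlaw k,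
      integral_add_measure h1 h2, integral_smul_measure, integral_smul_measure,
      integral_dirac, integral_dirac]
    simp only [smul_eq_mul, ENNReal.toReal_div, ENNReal.toReal_one, ENNReal.toReal_ofNat]
    ring

/-- Chernoff tail bound for a Rademacher linear combination. -/
lemma rade_tail {Ω : Type*} [MeasurableSpace Ω] (P : Measure Ω) [IsProbabilityMeasure P]
    {n : ℕ} (ε : Fin n → Ω → ℝ)
    (hmeas : ∀ k, Measurable (ε k))
    (hindep : iIndepFun ε P)
    (hlaw : ∀ k, Measure.map (ε k) P =
      (1 / 2 : ENNReal) • Measure.dirac (1 : ℝ) +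
        (1 / 2 : ENNReal) • Measure.dirac (-1 : ℝ))
    (a : Fin n → ℝ) (σ2 t s : ℝ) (hσ : ∑ k, a k ^ 2 ≤ σ2) (hs : 0 ≤ s) :
    P {ω | t ≤ ∑ k, a k * ε k ω} ≤
      ENNReal.ofReal (Real.exp (-s * t + s ^ 2 * σ2 / 2)) := by
  classical
  set X : Fin n → Ω → ℝ := fun k ω => a k * ε k ω with hX
  have hXmeas : ∀ k, Measurable (X k) := fun k => (hmeas k).const_mul (a k)
  have hXindep : iIndepFun X P :=
    hindep.comp (fun k y => a k * y) (fun k => measurable_const_mul _)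
  have hgmeas : ∀ k : Fin n, Measurable fun y : ℝ => Real.exp (s * (a k * y)) :=
    fun k => (measurable_id.const_mul (a k)).const_mul s |>.exp
  have hint : ∀ k, Integrable (fun ω => Real.exp (s * X k ω)) P :=
    fun k => (rade_integrable_aux P ε hmeas hlaw k _ (hgmeas k)).1
  have hmgf : ∀ k, mgf (X k) P s ≤ Real.exp (s ^ 2 * a k ^ 2 / 2) := by
    intro k
    have h2 := (rade_integrable_aux P ε hmeas hlaw k _ (hgmeas k)).2
    have : mgf (X k) P s = (Real.exp (s * a k) + Real.exp (-(s * a k))) / 2 := by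
      rw [mgf]
      rw [show (fun ω => Real.exp (s * X k ω)) = fun ω => Real.exp (s * (a k * ε k ω)) from rfl]
      rw [h2]; ring_nf
    rw [this]
    calc (Real.exp (s * a k) + Real.exp (-(s * a k))) / 2 = Real.cosh (s * a k) := by
          rw [Real.cosh_eq]
      _ ≤ Real.exp ((s * a k) ^ 2 / 2) := Real.cosh_le_exp_half_sq _
      _ = Real.exp (s ^ 2 * a k ^ 2 / 2) := by ring_nf
  have hSle : mgf (∑ k, X k) P s ≤ Real.exp (s ^ 2 * σ2 / 2) := by
    rw [hXindep.mgf_sum hXmeas Finset.univ]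
    calc ∏ k, mgf (X k) P s ≤ ∏ k, Real.exp (s ^ 2 * a k ^ 2 / 2) :=
          Finset.prod_le_prod (fun k _ => mgf_nonneg) (fun k _ => hmgf k)
      _ = Real.exp (∑ k, s ^ 2 * a k ^ 2 / 2) := by rw [Real.exp_sum]
      _ ≤ Real.exp (s ^ 2 * σ2 / 2) := by
          apply Real.exp_le_exp.mpr
          have : ∑ k, s ^ 2 * a k ^ 2 / 2 = s ^ 2 / 2 * ∑ k, a k ^ 2 := by
            rw [Finset.mul_sum]; exact Finset.sum_congr rfl fun k _ => by ring
          rw [this]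
          nlinarith [sq_nonneg s]
  have hintS : Integrable (fun ω => Real.exp (s * (∑ k, X k) ω)) P :=
    hXindep.integrable_exp_mul_sum hXmeas (fun k _ => hint k)
  have hcher := measure_ge_le_exp_mul_mgf (μ := P) (X := ∑ k, X k) t hs hintS
  have hset : {ω | t ≤ ∑ k, a k * ε k ω} = {ω | t ≤ (∑ k, X k) ω} := by
    ext ω; simp [hX]
  rw [hset, ENNReal.le_ofReal_iff_toReal_le (measure_ne_top _ _) (Real.exp_pos _).le]
  calc (P {ω | t ≤ (∑ k, X k) ω}).toReal ≤ Real.exp (-s * t) * mgf (∑ k, X k) P s := hcher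
    _ ≤ Real.exp (-s * t) * Real.exp (s ^ 2 * σ2 / 2) := by
        exact mul_le_mul_of_nonneg_left hSle (Real.exp_pos _).le
    _ = Real.exp (-s * t + s ^ 2 * σ2 / 2) := (Real.exp_add _ _).symm

/-- **The randomized Hadamard-type matrix `HD` is `(log n, 2n e^{-log²(n)/8})`-balanced.**
If all entries of `H` satisfy `|Hᵢⱼ| ≤ 1/√n` and `D` is a random diagonal matrix with
independent Rademacher diagonal entries `ε₁,...,εₙ`, then for every unit vector `x`,
`P[‖HDx‖_∞ > log(n)/√n] ≤ 2n exp(-log²(n)/8)`. -/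
theorem stmt8 {Ω : Type*} [MeasurableSpace Ω] (P : Measure Ω) [IsProbabilityMeasure P]
    (n : ℕ) (hn : 1 ≤ n) (H : Matrix (Fin n) (Fin n) ℝ)
    (hH : ∀ i j, |H i j| ≤ 1 / Real.sqrt n)
    (x : Fin n → ℝ) (hx : ∑ k, (x k) ^ 2 = 1)
    (ε : Fin n → Ω → ℝ)
    (hmeas : ∀ k, Measurable (ε k))
    (hindep : iIndepFun ε P)
    (hlaw : ∀ k, Measure.map (ε k) P =
      (1 / 2 : ENNReal) • Measure.dirac (1 : ℝ) +
        (1 / 2 : ENNReal) • Measure.dirac (-1 : ℝ)) :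
    P {ω | ∃ i, Real.log n / Real.sqrt n <
        |Matrix.mulVec H (fun k => ε k ω * x k) i|} ≤
      ENNReal.ofReal (2 * n * Real.exp (-(Real.log n) ^ 2 / 8)) := by
  classical
  have hn1 : (1 : ℝ) ≤ (n : ℝ) := by exact_mod_cast hn
  have hn0 : (0 : ℝ) < (n : ℝ) := by linarith
  have hrpos : 0 < Real.sqrt n := Real.sqrt_pos.mpr hn0
  have hr2 : Real.sqrt n ^ 2 = (n : ℝ) := Real.sq_sqrt hn0.le
  set L : ℝ := Real.log n with hL
  have hL0 : 0 ≤ L := Real.log_nonneg hn1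
  set t : ℝ := L / Real.sqrt n with ht
  set s : ℝ := Real.sqrt n * L with hs
  have hs0 : 0 ≤ s := mul_nonneg hrpos.le hL0
  have hE : -s * t + s ^ 2 * (1 / n) / 2 = -(L ^ 2) / 2 := by
    rw [hs, ht]
    field_simp
    nlinarith [hr2]
  have hEF : Real.exp (-s * t + s ^ 2 * (1 / n) / 2) ≤ Real.exp (-(L ^ 2) / 8) := by
    rw [hE]
    apply Real.exp_le_exp.mpr
    nlinarith [sq_nonneg L]
  -- per-row bound
  have hrow : ∀ i, P {ω | t < |Matrix.mulVec H (fun k => ε k ω * x k) i|} ≤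
      ENNReal.ofReal (Real.exp (-(L ^ 2) / 8)) + ENNReal.ofReal (Real.exp (-(L ^ 2) / 8)) := by
    intro i
    set a : Fin n → ℝ := fun k => H i k * x k with ha
    have hσ : ∑ k, a k ^ 2 ≤ 1 / n := by
      have hterm : ∀ k, a k ^ 2 ≤ (1 / n) * x k ^ 2 := by
        intro k
        have h1 : (H i k) ^ 2 ≤ 1 / n := by
          have := hH i k
          have h2 : |H i k| ^ 2 ≤ (1 / Real.sqrt n) ^ 2 :=
            pow_le_pow_left₀ (abs_nonneg _) this 2
          rwa [sq_abs, div_pow, one_pow, hr2] at h2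
        have : a k ^ 2 = (H i k) ^ 2 * x k ^ 2 := by rw [ha]; ring
        rw [this]
        exact mul_le_mul_of_nonneg_right h1 (sq_nonneg _)
      calc ∑ k, a k ^ 2 ≤ ∑ k, (1 / n) * x k ^ 2 := Finset.sum_le_sum fun k _ => hterm k
        _ = 1 / n := by rw [← Finset.mul_sum, hx, mul_one]
    have hσ' : ∑ k, (-a k) ^ 2 ≤ 1 / n := by simpa [neg_pow] using hσ
    have hup := rade_tail P ε hmeas hindep hlaw a (1 / n) t s hσ hs0
    have hdown := rade_tail P ε hmeas hindep hlaw (fun k => -a k) (1 / n) t s hσ' hs0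
    have hsub : {ω | t < |Matrix.mulVec H (fun k => ε k ω * x k) i|} ⊆
        {ω | t ≤ ∑ k, a k * ε k ω} ∪ {ω | t ≤ ∑ k, (-a k) * ε k ω} := by
      intro ω hω
      simp only [Set.mem_setOf_eq] at hω
      have hmv : Matrix.mulVec H (fun k => ε k ω * x k) i = ∑ k, a k * ε k ω := by
        simp only [Matrix.mulVec, dotProduct, ha]
        exact Finset.sum_congr rfl fun k _ => by ring
      rw [hmv] at hω
      rcases le_abs.mp hω.le with h | h
      · exact Or.inl h
      · refine Or.inr ?_
        simp only [Set.mem_setOf_eq, neg_mul]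
        rw [← Finset.sum_neg_distrib] at h
        exact h
    calc P {ω | t < |Matrix.mulVec H (fun k => ε k ω * x k) i|}
        ≤ P ({ω | t ≤ ∑ k, a k * ε k ω} ∪ {ω | t ≤ ∑ k, (-a k) * ε k ω}) := measure_mono hsub
      _ ≤ P {ω | t ≤ ∑ k, a k * ε k ω} + P {ω | t ≤ ∑ k, (-a k) * ε k ω} := measure_union_le _ _
      _ ≤ ENNReal.ofReal (Real.exp (-(L ^ 2) / 8)) + ENNReal.ofReal (Real.exp (-(L ^ 2) / 8)) := by
          gcongr
          · exact hup.trans (ENNReal.ofReal_le_ofReal hEF)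
          · exact hdown.trans (ENNReal.ofReal_le_ofReal hEF)
  -- union bound
  have hunion : {ω | ∃ i, t < |Matrix.mulVec H (fun k => ε k ω * x k) i|} =
      ⋃ i, {ω | t < |Matrix.mulVec H (fun k => ε k ω * x k) i|} := by
    ext ω; simp
  calc P {ω | ∃ i, t < |Matrix.mulVec H (fun k => ε k ω * x k) i|}
      ≤ ∑' i : Fin n, P {ω | t < |Matrix.mulVec H (fun k => ε k ω * x k) i|} := by
        rw [hunion]; exact measure_iUnion_le _
    _ = ∑ i : Fin n, P {ω | t < |Matrix.mulVec H (fun k => ε k ω * x k) i|} := tsum_fintype _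
    _ ≤ ∑ _i : Fin n, (ENNReal.ofReal (Real.exp (-(L ^ 2) / 8)) +
          ENNReal.ofReal (Real.exp (-(L ^ 2) / 8))) := Finset.sum_le_sum fun i _ => hrow i
    _ = n * (ENNReal.ofReal (Real.exp (-(L ^ 2) / 8)) +
          ENNReal.ofReal (Real.exp (-(L ^ 2) / 8))) := by
        rw [Finset.sum_const, Finset.card_univ, Fintype.card_fin, nsmul_eq_mul]
    _ ≤ ENNReal.ofReal (2 * n * Real.exp (-(L ^ 2) / 8)) := by
        rw [← ENNReal.ofReal_add (Real.exp_pos _).le (Real.exp_pos _).le,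
          ← ENNReal.ofReal_natCast n, ← ENNReal.ofReal_mul (Nat.cast_nonneg n)]
        apply ENNReal.ofReal_le_ofReal
        nlinarith [Real.exp_pos (-(L ^ 2) / 8), hn0]
end

section
/- Let n ≥ 1 and let H ∈ ℝ^{n×n} be an orthogonal matrix (HᵀH = I) all of whose entries have absolute value exactly 1/√n. For each i ∈ {1,...,n}, define W^i = √n · D_{h_i} · H, where D_{h_i} is the diagonal matrix whose diagonal is the i-th row of H. Then: (a) every column of every W^i has Euclidean norm 1; and (b) for all i ≠ j and every l ∈ {1,...,n}, the l-th column of W^i is orthogonal to the l-th column of W^j, i.e. the diagonal of (W^j)ᵀW^i is zero. -/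
open Matrix

/-- **Smoothness properties (columns) of the Hadamard-based `W`-matrices.** Let `H` be an
orthogonal `n × n` matrix all of whose entries have absolute value `1/√n`, and set
`Wⁱ = √n · D_{hᵢ} · H` where `hᵢ` is the `i`-th row of `H`. Then every column of every
`Wⁱ` has unit Euclidean norm, and for `i ≠ j` corresponding columns of `Wⁱ` and `Wʲ` are
orthogonal (the diagonal of `(Wʲ)ᵀWⁱ` vanishes). -/
theorem stmt9 (n : ℕ) (hn : 1 ≤ n) (H : Matrix (Fin n) (Fin n) ℝ)
    (horth : Hᵀ * H = 1) (hentry : ∀ i j, |H i j| = 1 / Real.sqrt n)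
    (W : Fin n → Matrix (Fin n) (Fin n) ℝ)
    (hW : ∀ i, W i = (Real.sqrt n) • (Matrix.diagonal (H i) * H)) :
    (∀ i l, ∑ k, (W i k l) ^ 2 = 1) ∧
      (∀ i j, i ≠ j → ∀ l, ∑ k, W i k l * W j k l = 0) := by
  have hn0 : (0:ℝ) < n := by exact_mod_cast Nat.lt_of_lt_of_le Nat.zero_lt_one hn
  have hsqrt : Real.sqrt n ^ 2 = n := Real.sq_sqrt (le_of_lt hn0)
  have hsq : ∀ a b, (H a b) ^ 2 = 1 / n := by
    intro a b
    rw [← sq_abs, hentry, div_pow, one_pow, hsqrt]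
  have hWe : ∀ i k l, W i k l = Real.sqrt n * (H i k * H k l) := by
    intro i k l
    rw [hW]
    simp [Matrix.mul_apply, Matrix.diagonal, Finset.mul_sum]
  have hHHt : H * Hᵀ = 1 := mul_eq_one_comm.mp horth
  constructor
  · intro i l
    have : ∀ k, (W i k l) ^ 2 = 1 / n * (1 / n) * n := by
      intro k
      rw [hWe, mul_pow, mul_pow, hsqrt, hsq, hsq]
      ring
    rw [Finset.sum_congr rfl fun k _ => this k]
    field_simp
    rw [Finset.sum_const, Finset.card_univ, Fintype.card_fin, nsmul_eq_mul]
    field_simp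
  · intro i j hij l
    have : ∀ k, W i k l * W j k l = H i k * H j k := by
      intro k
      rw [hWe, hWe]
      have : Real.sqrt n * (H i k * H k l) * (Real.sqrt n * (H j k * H k l))
          = (Real.sqrt n ^ 2) * ((H k l)^2) * (H i k * H j k) := by ring
      rw [this, hsqrt, hsq]
      field_simp
    rw [Finset.sum_congr rfl fun k _ => this k]
    have := congrArg (fun M => M i j) hHHt
    simpa [Matrix.mul_apply, Matrix.one_apply, hij] using this
end

section
/- Let n ≥ 1 and let H ∈ ℝ^{n×n} be an orthogonal matrix (HᵀH = I) all of whose entries have absolute value exactly 1/√n. For each i define W^i = √n · D_{h_i} · H, where D_{h_i} is the diagonal matrix whose diagonal is the i-th row of H. Then for all i, j ∈ {1,...,n}, the matrix A^{i,j} := (W^j)ᵀW^i = n·Hᵀ D_{h_j} D_{h_i} H is an orthogonal matrix; consequently its Frobenius norm equals √n and its operator (spectral) norm equals 1. -/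
open Matrix

/-- **Smoothness parameters `Λ_F = √n`, `Λ₂ = 1` for the Hadamard-based construction.**
Let `H` be an orthogonal `n × n` matrix all of whose entries have absolute value `1/√n`,
and set `Wⁱ = √n · D_{hᵢ} · H`. Then for all `i, j`, the matrix
`A^{i,j} = (Wʲ)ᵀWⁱ = n·HᵀD_{hⱼ}D_{hᵢ}H` is orthogonal; its Frobenius norm equals `√n`
and its operator (spectral) norm equals `1`. -/
theorem stmt10 (n : ℕ) (hn : 1 ≤ n) (H : Matrix (Fin n) (Fin n) ℝ)
    (horth : Hᵀ * H = 1) (hentry : ∀ i j, |H i j| = 1 / Real.sqrt n)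
    (W : Fin n → Matrix (Fin n) (Fin n) ℝ)
    (hW : ∀ i, W i = (Real.sqrt n) • (Matrix.diagonal (H i) * H))
    (A : Fin n → Fin n → Matrix (Fin n) (Fin n) ℝ)
    (hA : ∀ i j, A i j = (W j)ᵀ * W i) :
    ∀ i j,
      A i j = (n : ℝ) • (Hᵀ * Matrix.diagonal (H j) * (Matrix.diagonal (H i) * H)) ∧
      (A i j)ᵀ * A i j = 1 ∧
      Real.sqrt (∑ k, ∑ l, (A i j k l) ^ 2) = Real.sqrt n ∧
      ‖Matrix.toEuclideanCLM (𝕜 := ℝ) (A i j)‖ = 1 := by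
  have hn0 : (0:ℝ) < n := by exact_mod_cast hn
  have hsq : Real.sqrt n * Real.sqrt n = n := Real.mul_self_sqrt hn0.le
  have hHHt : H * Hᵀ = 1 := mul_eq_one_comm.mp horth
  have hent2 : ∀ i k, H i k ^ 2 = 1 / n := by
    intro i k
    have h2 : |H i k| ^ 2 = (1 / Real.sqrt n) ^ 2 := by rw [hentry i k]
    rw [sq_abs] at h2
    rw [h2, div_pow, one_pow, sq, hsq]
  intro i j
  have h1 : A i j = (n : ℝ) • (Hᵀ * Matrix.diagonal (H j) * (Matrix.diagonal (H i) * H)) := by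
    rw [hA, hW, hW, transpose_smul, transpose_mul, diagonal_transpose, smul_mul_assoc,
      mul_smul_comm, smul_smul, hsq]
  have h2 : (A i j)ᵀ * A i j = 1 := by
    rw [h1]
    simp only [transpose_smul, transpose_mul, diagonal_transpose, transpose_transpose,
      smul_mul_smul_comm, Matrix.mul_assoc]
    rw [← Matrix.mul_assoc H Hᵀ, hHHt, Matrix.one_mul]
    have hfun : (fun k => H i k * (H j k * (H j k * H i k))) = ((1:ℝ)/((n:ℝ)*n)) • (fun _ : Fin n => (1:ℝ)) := by
      funext k
      have hi := hent2 i k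
      have hj := hent2 j k
      have h : H i k * (H j k * (H j k * H i k)) = (H i k ^2) * (H j k ^2) := by ring
      rw [Pi.smul_apply, h, hi, hj, smul_eq_mul]
      ring
    calc ((n:ℝ) * (n:ℝ)) • (Hᵀ * (Matrix.diagonal (H i) * (Matrix.diagonal (H j) * (Matrix.diagonal (H j) * (Matrix.diagonal (H i) * H)))))
        = ((n:ℝ) * (n:ℝ)) • (Hᵀ * (Matrix.diagonal (fun k => H i k * (H j k * (H j k * H i k))) * H)) := by
          simp only [← Matrix.mul_assoc, diagonal_mul_diagonal]
      _ = ((n:ℝ) * (n:ℝ)) • (((1:ℝ)/((n:ℝ)*n)) • (Hᵀ * H)) := by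
          rw [hfun, Matrix.diagonal_smul, Matrix.diagonal_one, Matrix.smul_mul, Matrix.mul_smul, Matrix.one_mul]
      _ = 1 := by
          rw [horth, smul_smul]
          have h : ((n:ℝ) * n) * ((1:ℝ)/((n:ℝ)*n)) = 1 := by field_simp
          rw [h, one_smul]
  have h3 : Real.sqrt (∑ k, ∑ l, (A i j k l) ^ 2) = Real.sqrt n := by
    congr 1
    have hcol : ∀ l, ∑ k, (A i j k l) ^ 2 = 1 := by
      intro l
      have := congrArg (fun M => M l l) h2
      simpa [Matrix.mul_apply, Matrix.one_apply, transpose_apply, sq] using this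
    rw [Finset.sum_comm]
    simp [hcol]
  refine ⟨h1, h2, h3, ?_⟩
  have hstar : star (A i j) = (A i j)ᵀ := by
    rw [Matrix.star_eq_conjTranspose, Matrix.conjTranspose_eq_transpose_of_trivial]
  have hmem : Matrix.toEuclideanCLM (𝕜 := ℝ) (A i j) ∈ unitary _ := by
    constructor
    · rw [← map_star, ← _root_.map_mul, hstar, h2, _root_.map_one]
    · rw [← map_star, ← _root_.map_mul, hstar, mul_eq_one_comm.mp h2, _root_.map_one]
  haveI : Nonempty (Fin n) := Fin.pos_iff_nonempty.mp hn
  haveI : Nontrivial (EuclideanSpace ℝ (Fin n)) := inferInstance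
  exact CStarRing.norm_of_mem_unitary hmem
end

section
/- For every k ≥ 1 there exists a constant C > 0 (depending only on k) such that the following holds: for every ε with 0 < ε ≤ 1/(2k) and every symmetric matrix E ∈ ℝ^{k×k} with zero diagonal and all entries of absolute value at most ε (so that I + E is positive definite), and for every convex Borel set S ⊆ ℝᵏ, |N(0, I+E)(S) − N(0, I)(S)| ≤ C·ε, where N(0, Σ) denotes the centered Gaussian measure on ℝᵏ with covariance matrix Σ. -/
open MeasureTheory Matrix

/-- Density of the centered Gaussian measure `N(0, S)` on `ℝᵏ` with (positive definite)
covariance matrix `S`: `(2π)^{-k/2} det(S)^{-1/2} exp(-xᵀS⁻¹x/2)`. -/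
noncomputable def gaussDensity (k : ℕ) (S : Matrix (Fin k) (Fin k) ℝ)
    (x : Fin k → ℝ) : ℝ :=
  (Real.sqrt ((2 * Real.pi) ^ k * S.det))⁻¹ *
    Real.exp (-(∑ i, ∑ j, x i * S⁻¹ i j * x j) / 2)

section aux
variable {k : ℕ}

lemma aux_dot_sq (x y : Fin k → ℝ) : (x ⬝ᵥ y)^2 ≤ (x ⬝ᵥ x) * (y ⬝ᵥ y) := by
  simpa [dotProduct, sq] using Finset.sum_mul_sq_le_sq_mul_sq Finset.univ x y

lemma aux_dot_nonneg (x : Fin k → ℝ) : 0 ≤ x ⬝ᵥ x :=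
  Finset.sum_nonneg fun i _ => mul_self_nonneg _

lemma aux_dot_pos {x : Fin k → ℝ} (hx : x ≠ 0) : 0 < x ⬝ᵥ x := by
  obtain ⟨i, hi⟩ := Function.ne_iff.1 hx
  exact Finset.sum_pos' (fun j _ => mul_self_nonneg _)
    ⟨i, Finset.mem_univ i, mul_self_pos.2 hi⟩

lemma aux_symm_dot {M : Matrix (Fin k) (Fin k) ℝ} (hM : M.IsSymm) (x y : Fin k → ℝ) :
    x ⬝ᵥ (M *ᵥ y) = (M *ᵥ x) ⬝ᵥ y := by
  rw [dotProduct_mulVec]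
  congr 1
  rw [← vecMul_transpose, hM.eq]

lemma aux_exp_diff {a b m : ℝ} (ha : m ≤ a) (hb : m ≤ b) :
    |Real.exp (-a) - Real.exp (-b)| ≤ |a - b| * Real.exp (-m) := by
  rcases le_total a b with h | h
  · have h1 : Real.exp (-b) ≤ Real.exp (-a) := Real.exp_le_exp.2 (by linarith)
    have h2 : Real.exp (-a) - Real.exp (-b) ≤ (b - a) * Real.exp (-a) := by
      have := Real.add_one_le_exp (a - b)
      have e : Real.exp (-b) = Real.exp (a - b) * Real.exp (-a) := by
        rw [← Real.exp_add]; ring_nf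
      nlinarith [Real.exp_pos (-a)]
    have h3 : Real.exp (-a) ≤ Real.exp (-m) := Real.exp_le_exp.2 (by linarith)
    rw [abs_of_nonneg (by linarith), abs_of_nonpos (by linarith)]
    nlinarith [Real.exp_pos (-a)]
  · have h1 : Real.exp (-a) ≤ Real.exp (-b) := Real.exp_le_exp.2 (by linarith)
    have h2 : Real.exp (-b) - Real.exp (-a) ≤ (a - b) * Real.exp (-b) := by
      have := Real.add_one_le_exp (b - a)
      have e : Real.exp (-a) = Real.exp (b - a) * Real.exp (-b) := by
        rw [← Real.exp_add]; ring_nf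
      nlinarith [Real.exp_pos (-b)]
    have h3 : Real.exp (-b) ≤ Real.exp (-m) := Real.exp_le_exp.2 (by linarith)
    rw [abs_of_nonpos (by linarith), abs_of_nonneg (by linarith)]
    nlinarith [Real.exp_pos (-b)]

lemma aux_abs_of_sq {a c : ℝ} (h : a^2 ≤ c^2) (hc : 0 ≤ c) : |a| ≤ c := by
  nlinarith [sq_abs a, abs_nonneg a]

lemma aux_E_bound {ε : ℝ} (hε : 0 ≤ ε) {E : Matrix (Fin k) (Fin k) ℝ}
    (hEbnd : ∀ i j, |E i j| ≤ ε) (x : Fin k → ℝ) :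
    (E *ᵥ x) ⬝ᵥ (E *ᵥ x) ≤ ((k:ℝ)*ε)^2 * (x ⬝ᵥ x) := by
  have hq : ∀ i, ((E *ᵥ x) i)^2 ≤ (k:ℝ) * ε^2 * (x ⬝ᵥ x) := by
    intro i
    have hcs : (∑ j, E i j * x j)^2 ≤ (∑ j, (E i j)^2) * (∑ j, (x j)^2) :=
      Finset.sum_mul_sq_le_sq_mul_sq Finset.univ _ _
    have h1 : (∑ j, (E i j)^2) ≤ (k:ℝ) * ε^2 := by
      calc (∑ j, (E i j)^2) ≤ ∑ _j : Fin k, ε^2 := by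
            refine Finset.sum_le_sum fun j _ => ?_
            have := hEbnd i j
            nlinarith [abs_nonneg (E i j), sq_abs (E i j)]
        _ = (k:ℝ) * ε^2 := by simp [mul_comm]
    have h2 : (0:ℝ) ≤ ∑ j, (x j)^2 := Finset.sum_nonneg fun j _ => sq_nonneg _
    have hx : x ⬝ᵥ x = ∑ j, (x j)^2 := by simp [dotProduct, sq]
    calc ((E *ᵥ x) i)^2 = (∑ j, E i j * x j)^2 := by simp [mulVec, dotProduct]
      _ ≤ (∑ j, (E i j)^2) * (∑ j, (x j)^2) := hcs
      _ ≤ ((k:ℝ) * ε^2) * (x ⬝ᵥ x) := by rw [hx]; exact mul_le_mul_of_nonneg_right h1 h2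
  calc (E *ᵥ x) ⬝ᵥ (E *ᵥ x) = ∑ i, ((E *ᵥ x) i)^2 := by simp [dotProduct, sq]
    _ ≤ ∑ _i : Fin k, (k:ℝ) * ε^2 * (x ⬝ᵥ x) := Finset.sum_le_sum fun i _ => hq i
    _ = ((k:ℝ)*ε)^2 * (x ⬝ᵥ x) := by simp; ring

lemma aux_CS_form {B : Matrix (Fin k) (Fin k) ℝ} (hsym : B.IsSymm)
    (hpos : ∀ x, 0 ≤ x ⬝ᵥ (B *ᵥ x)) (u v : Fin k → ℝ) :
    (u ⬝ᵥ (B *ᵥ v))^2 ≤ (u ⬝ᵥ (B *ᵥ u)) * (v ⬝ᵥ (B *ᵥ v)) := by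
  have key : ∀ t : ℝ, 0 ≤ (v ⬝ᵥ (B *ᵥ v)) * (t*t) + (2 * (u ⬝ᵥ (B *ᵥ v))) * t
      + (u ⬝ᵥ (B *ᵥ u)) := by
    intro t
    have h0 := hpos (u + t • v)
    have hexp : (u + t • v) ⬝ᵥ (B *ᵥ (u + t • v)) =
        (v ⬝ᵥ (B *ᵥ v)) * (t*t) + (2 * (u ⬝ᵥ (B *ᵥ v))) * t + (u ⬝ᵥ (B *ᵥ u)) := by
      have hvu : v ⬝ᵥ (B *ᵥ u) = u ⬝ᵥ (B *ᵥ v) := by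
        rw [aux_symm_dot hsym, dotProduct_comm]
      rw [mulVec_add, mulVec_smul, add_dotProduct, smul_dotProduct,
        dotProduct_add, dotProduct_add, dotProduct_smul, dotProduct_smul, hvu]
      simp only [smul_eq_mul]
      ring
    rw [hexp] at h0
    exact h0
  have hd := discrim_le_zero key
  rw [discrim] at hd
  nlinarith [hd]

lemma aux_gauss_int {c : ℝ} (hc : 0 < c) :
    Integrable (fun x : Fin k → ℝ => Real.exp (-c * (x ⬝ᵥ x))) := by
  have : (fun x : Fin k → ℝ => Real.exp (-c * (x ⬝ᵥ x)))
      = fun x : Fin k → ℝ => ∏ i, Real.exp (-c * (x i)^2) := by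
    funext x
    rw [← Real.exp_sum]
    congr 1
    simp [dotProduct, Finset.mul_sum, sq]
  rw [this]
  exact Integrable.fintype_prod fun i => integrable_exp_neg_mul_sq hc

lemma aux_det_diff {ε : ℝ} (hε0 : 0 ≤ ε) (hε1 : ε ≤ 1) {E : Matrix (Fin k) (Fin k) ℝ}
    (hEdiag : ∀ i, E i i = 0) (hEbnd : ∀ i j, |E i j| ≤ ε) :
    |(1 + E).det - 1| ≤ (k.factorial : ℝ) * ε := by
  set B := 1 + E with hB
  have hBd : ∀ i, B i i = 1 := by
    intro i; simp [hB, Matrix.add_apply, Matrix.one_apply, hEdiag i]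
  have hBo : ∀ i j, i ≠ j → |B i j| ≤ ε := by
    intro i j hij
    simp only [hB, Matrix.add_apply, Matrix.one_apply_ne hij, zero_add]
    exact hEbnd i j
  have habs : ∀ i j, |B i j| ≤ 1 := by
    intro i j
    by_cases hij : i = j
    · subst hij; rw [hBd i]; simp
    · exact (hBo i j hij).trans hε1
  rw [Matrix.det_apply]
  have h1mem : (1 : Equiv.Perm (Fin k)) ∈ (Finset.univ : Finset (Equiv.Perm (Fin k))) :=
    Finset.mem_univ _
  rw [← Finset.add_sum_erase _ _ h1mem]
  have hid : (Equiv.Perm.sign (1 : Equiv.Perm (Fin k))) • ∏ i, B ((1 : Equiv.Perm (Fin k)) i) i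
      = (1:ℝ) := by
    simp [hBd]
  rw [hid]
  rw [add_sub_cancel_left]
  calc |∑ σ ∈ Finset.univ.erase 1, (Equiv.Perm.sign σ) • ∏ i, B (σ i) i|
      ≤ ∑ σ ∈ Finset.univ.erase 1, |(Equiv.Perm.sign σ) • ∏ i, B (σ i) i| :=
        Finset.abs_sum_le_sum_abs _ _
    _ ≤ ∑ _σ ∈ (Finset.univ : Finset (Equiv.Perm (Fin k))).erase 1, ε := by
        refine Finset.sum_le_sum fun σ hσ => ?_
        have hσ1 : σ ≠ 1 := (Finset.mem_erase.1 hσ).1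
        obtain ⟨i, hi⟩ : ∃ i, σ i ≠ i := by
          by_contra h
          push_neg at h
          exact hσ1 (Equiv.ext h)
        have hsgn : |(Equiv.Perm.sign σ) • ∏ i, B (σ i) i| = |∏ i, B (σ i) i| := by
          rcases Int.units_eq_one_or (Equiv.Perm.sign σ) with h | h <;> rw [h] <;> simp
        rw [hsgn, Finset.abs_prod]
        rw [← Finset.mul_prod_erase Finset.univ _ (Finset.mem_univ i)]
        have h1 : |B (σ i) i| ≤ ε := hBo _ _ hi
        have h2 : ∏ j ∈ Finset.univ.erase i, |B (σ j) j| ≤ 1 :=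
          Finset.prod_le_one (fun j _ => abs_nonneg _) (fun j _ => habs _ _)
        calc |B (σ i) i| * ∏ j ∈ Finset.univ.erase i, |B (σ j) j|
            ≤ ε * 1 := mul_le_mul h1 h2 (Finset.prod_nonneg fun j _ => abs_nonneg _) hε0
          _ = ε := mul_one ε
    _ = ((Finset.univ : Finset (Equiv.Perm (Fin k))).erase 1).card * ε := by
        rw [Finset.sum_const, nsmul_eq_mul]
    _ ≤ (k.factorial : ℝ) * ε := by
        refine mul_le_mul_of_nonneg_right ?_ hε0
        have h3 : ((Finset.univ : Finset (Equiv.Perm (Fin k))).erase 1).card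
            ≤ Fintype.card (Equiv.Perm (Fin k)) :=
          (Finset.card_erase_le).trans (le_of_eq (Finset.card_univ))
        have hcard : Fintype.card (Equiv.Perm (Fin k)) = k.factorial := by
          rw [Fintype.card_perm, Fintype.card_fin]
        exact_mod_cast hcard ▸ h3

lemma aux_det_range {B : Matrix (Fin k) (Fin k) ℝ} (hB : B.IsHermitian)
    (hlo : ∀ x : Fin k → ℝ, (1/2) * (x ⬝ᵥ x) ≤ x ⬝ᵥ (B *ᵥ x))
    (hhi : ∀ x : Fin k → ℝ, x ⬝ᵥ (B *ᵥ x) ≤ (3/2) * (x ⬝ᵥ x)) :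
    ((1:ℝ)/2)^k ≤ B.det ∧ B.det ≤ ((3:ℝ)/2)^k := by
  have heig : ∀ j, 1/2 ≤ hB.eigenvalues j ∧ hB.eigenvalues j ≤ 3/2 := by
    intro j
    set v : Fin k → ℝ := ⇑(hB.eigenvectorBasis j) with hv
    have hnorm : ‖hB.eigenvectorBasis j‖ = 1 := hB.eigenvectorBasis.orthonormal.1 j
    have hvv : v ⬝ᵥ v = 1 := by
      have h1 : Real.sqrt (∑ i, ‖hB.eigenvectorBasis j i‖^2) = 1 := by
        rw [← EuclideanSpace.norm_eq]; exact hnorm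
      have h2 : (∑ i, ‖hB.eigenvectorBasis j i‖^2) = 1 := by
        have hnn : (0:ℝ) ≤ ∑ i, ‖hB.eigenvectorBasis j i‖^2 :=
          Finset.sum_nonneg fun i _ => sq_nonneg _
        nlinarith [Real.sq_sqrt hnn, h1]
      calc v ⬝ᵥ v = ∑ i, ‖hB.eigenvectorBasis j i‖^2 := by
            simp [dotProduct, hv, Real.norm_eq_abs, sq_abs, sq]
        _ = 1 := h2
    have hmv : B *ᵥ v = hB.eigenvalues j • v := hB.mulVec_eigenvectorBasis j
    have hdot : v ⬝ᵥ (B *ᵥ v) = hB.eigenvalues j := by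
      rw [hmv, dotProduct_smul, hvv, smul_eq_mul, mul_one]
    constructor
    · have := hlo v; rw [hdot, hvv] at this; linarith
    · have := hhi v; rw [hdot, hvv] at this; linarith
  have hdet : B.det = ∏ j, hB.eigenvalues j := by
    have := hB.det_eq_prod_eigenvalues
    exact_mod_cast this
  rw [hdet]
  constructor
  · calc ((1:ℝ)/2)^k = ∏ _j : Fin k, ((1:ℝ)/2) := by simp
      _ ≤ ∏ j, hB.eigenvalues j :=
        Finset.prod_le_prod (fun j _ => by norm_num) (fun j _ => (heig j).1)
  · calc ∏ j, hB.eigenvalues j ≤ ∏ _j : Fin k, ((3:ℝ)/2) :=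
        Finset.prod_le_prod (fun j _ => by linarith [(heig j).1]) (fun j _ => (heig j).2)
      _ = ((3:ℝ)/2)^k := by rw [Finset.prod_const, Finset.card_univ, Fintype.card_fin]

lemma aux_rayleigh_inv {qx QA xBx : ℝ} (hq : 0 < qx) (hcs : qx^2 ≤ QA * xBx)
    (h1 : xBx ≤ (3/2)*qx) (h2 : (1/2)*qx ≤ xBx) : (2/3)*qx ≤ QA := by
  nlinarith [hcs, h1, h2, hq, mul_pos hq hq]

lemma aux_Ax_sq {qy qx d : ℝ} (h1 : (1/2)*qy ≤ d) (h2 : d^2 ≤ qy*qx)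
    (h3 : 0 ≤ qy) (h4 : 0 ≤ qx) : qy ≤ 4*qx := by
  nlinarith [h1, h2, h3, h4]

lemma aux_prod_sq {p qA qE qx c : ℝ} (h2 : p^2 ≤ qA*qE)
    (h8 : qA*qE ≤ (4*qx)*(c^2*qx)) : p^2 ≤ (2*c*qx)^2 := by
  nlinarith [h2, h8]

end aux


set_option maxHeartbeats 2000000 in
/-- **Quantitative Gaussian comparison on convex sets (ξ = O(ε)).** For every `k ≥ 1`
there is a constant `C > 0` such that for every `0 < ε ≤ 1/(2k)`, every symmetric matrix
`E` with zero diagonal and entries of absolute value at most `ε`, and every convex Borel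
set `S ⊆ ℝᵏ`, `|N(0, I+E)(S) − N(0, I)(S)| ≤ C·ε`, where `N(0,Σ)` is the centered
Gaussian measure with covariance `Σ` (given by its density with respect to Lebesgue
measure). -/
theorem stmt17 (k : ℕ) (hk : 1 ≤ k) :
    ∃ C : ℝ, 0 < C ∧
      ∀ ε : ℝ, 0 < ε → ε ≤ 1 / (2 * k) →
        ∀ E : Matrix (Fin k) (Fin k) ℝ, E.IsSymm → (∀ i, E i i = 0) →
          (∀ i j, |E i j| ≤ ε) →
          ∀ S : Set (Fin k → ℝ), Convex ℝ S → MeasurableSet S →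
            |(∫ x in S, gaussDensity k (1 + E) x) -
                ∫ x in S, gaussDensity k 1 x| ≤ C * ε := by
  classical
  set c1 : ℝ := 2^k * (k.factorial : ℝ) with hc1
  set D : ℝ := c1 + 6 * k with hDdef
  set J : ℝ := ∫ x : Fin k → ℝ, Real.exp (-(1/6) * (x ⬝ᵥ x)) with hJdef
  have hJ0 : 0 ≤ J := integral_nonneg fun x => (Real.exp_pos _).le
  have hc10 : 0 < c1 := by rw [hc1]; positivity
  have hD0 : 0 < D := by rw [hDdef, hc1]; positivity
  clear_value c1 D J
  refine ⟨1 + D * J, by positivity, ?_⟩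
  intro ε hε hεk E hEsymm hEdiag hEbnd S hconv hmeas
  have hk0 : (0:ℝ) < k := by exact_mod_cast Nat.lt_of_lt_of_le Nat.zero_lt_one hk
  have hkε : (k:ℝ) * ε ≤ 1/2 := by
    have h2k : (0:ℝ) < 2*k := by positivity
    have h3 := (le_div_iff₀ h2k).1 hεk
    linarith only [h3]
  have hk1 : (1:ℝ) ≤ k := by exact_mod_cast hk
  have hε1 : ε ≤ 1 := by
    have h3 : ε * 1 ≤ ε * k := mul_le_mul_of_nonneg_left hk1 hε.le
    linarith only [h3, hkε, hε]
  set B := 1 + E with hBdef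
  clear_value B
  have hBsymm : B.IsSymm := by
    rw [Matrix.IsSymm, hBdef, transpose_add, transpose_one, hEsymm.eq]
  have hBherm : B.IsHermitian := by
    rw [Matrix.IsHermitian, conjTranspose_eq_transpose_of_trivial]
    exact hBsymm
  -- quadratic form bounds
  have hEq : ∀ x : Fin k → ℝ, (E *ᵥ x) ⬝ᵥ (E *ᵥ x) ≤ ((k:ℝ)*ε)^2 * (x ⬝ᵥ x) :=
    aux_E_bound hε.le hEbnd
  have hEx : ∀ x : Fin k → ℝ, |x ⬝ᵥ (E *ᵥ x)| ≤ ((k:ℝ)*ε) * (x ⬝ᵥ x) := by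
    intro x
    apply aux_abs_of_sq
    · calc (x ⬝ᵥ (E *ᵥ x))^2 ≤ (x ⬝ᵥ x) * ((E *ᵥ x) ⬝ᵥ (E *ᵥ x)) := aux_dot_sq x _
        _ ≤ (x ⬝ᵥ x) * (((k:ℝ)*ε)^2 * (x ⬝ᵥ x)) :=
          mul_le_mul_of_nonneg_left (hEq x) (aux_dot_nonneg x)
        _ = (((k:ℝ)*ε) * (x ⬝ᵥ x))^2 := by ring
    · exact mul_nonneg (mul_nonneg (Nat.cast_nonneg k) hε.le) (aux_dot_nonneg x)
  have hBquad : ∀ x : Fin k → ℝ, x ⬝ᵥ (B *ᵥ x) = x ⬝ᵥ x + x ⬝ᵥ (E *ᵥ x) := by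
    intro x; rw [hBdef, add_mulVec, one_mulVec, dotProduct_add]
  have hBlo : ∀ x : Fin k → ℝ, (1/2) * (x ⬝ᵥ x) ≤ x ⬝ᵥ (B *ᵥ x) := by
    intro x
    rw [hBquad x]
    have h1 := hEx x
    have h2 := aux_dot_nonneg x
    rw [abs_le] at h1
    have h3 : ((k:ℝ)*ε) * (x ⬝ᵥ x) ≤ (1/2) * (x ⬝ᵥ x) :=
      mul_le_mul_of_nonneg_right hkε h2
    linarith only [h1.1, h3]
  have hBhi : ∀ x : Fin k → ℝ, x ⬝ᵥ (B *ᵥ x) ≤ (3/2) * (x ⬝ᵥ x) := by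
    intro x
    rw [hBquad x]
    have h1 := hEx x
    have h2 := aux_dot_nonneg x
    rw [abs_le] at h1
    have h3 : ((k:ℝ)*ε) * (x ⬝ᵥ x) ≤ (1/2) * (x ⬝ᵥ x) :=
      mul_le_mul_of_nonneg_right hkε h2
    linarith only [h1.2, h3]
  have hq0 : ∀ x : Fin k → ℝ, 0 ≤ x ⬝ᵥ (B *ᵥ x) := fun x =>
    le_trans (by linarith only [aux_dot_nonneg x]) (hBlo x)
  have hBpd : B.PosDef := by
    refine Matrix.PosDef.of_dotProduct_mulVec_pos hBherm fun x hx => ?_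
    have hsx : star x = x := by
      funext i; simp
    rw [hsx]
    exact lt_of_lt_of_le (by linarith only [aux_dot_pos hx]) (hBlo x)
  have hdet_pos : 0 < B.det := hBpd.det_pos
  have hdet_unit : IsUnit B.det := isUnit_iff_ne_zero.2 hdet_pos.ne'
  set A := B⁻¹ with hAdef
  clear_value A
  have hBA : B * A = 1 := by rw [hAdef]; exact mul_nonsing_inv B hdet_unit
  have hAB : A * B = 1 := by rw [hAdef]; exact nonsing_inv_mul B hdet_unit
  have hAsymm : A.IsSymm := by
    rw [Matrix.IsSymm, hAdef, transpose_nonsing_inv, hBsymm.eq]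
  have hBAx : ∀ x : Fin k → ℝ, B *ᵥ (A *ᵥ x) = x := by
    intro x; rw [mulVec_mulVec, hBA, one_mulVec]
  have hAdotx : ∀ x : Fin k → ℝ, (A *ᵥ x) ⬝ᵥ (B *ᵥ x) = x ⬝ᵥ x := by
    intro x
    rw [aux_symm_dot hBsymm (A *ᵥ x) x, hBAx x]
  have hQAlo : ∀ x : Fin k → ℝ, (2/3) * (x ⬝ᵥ x) ≤ x ⬝ᵥ (A *ᵥ x) := by
    intro x
    have hcs := aux_CS_form hBsymm hq0 (A *ᵥ x) x
    rw [hAdotx x] at hcs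
    have hmid : (A *ᵥ x) ⬝ᵥ (B *ᵥ (A *ᵥ x)) = x ⬝ᵥ (A *ᵥ x) := by
      rw [hBAx x, dotProduct_comm]
    rw [hmid] at hcs
    rcases eq_or_ne x 0 with h | h
    · subst h; simp
    · have hqp := aux_dot_pos h
      exact aux_rayleigh_inv hqp hcs (hBhi x) (hBlo x)
  have hAxq : ∀ x : Fin k → ℝ, (A *ᵥ x) ⬝ᵥ (A *ᵥ x) ≤ 4 * (x ⬝ᵥ x) := by
    intro x
    have h1 := hBlo (A *ᵥ x)
    rw [hBAx x] at h1
    have h2 := aux_dot_sq (A *ᵥ x) x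
    have h3 := aux_dot_nonneg (A *ᵥ x)
    have h4 := aux_dot_nonneg x
    exact aux_Ax_sq h1 h2 h3 h4
  have hQAdiff : ∀ x : Fin k → ℝ, |x ⬝ᵥ (A *ᵥ x) - x ⬝ᵥ x| ≤ 2*((k:ℝ)*ε) * (x ⬝ᵥ x) := by
    intro x
    have hAE : x ⬝ᵥ (A *ᵥ x) - x ⬝ᵥ x = -((A *ᵥ x) ⬝ᵥ (E *ᵥ x)) := by
      have hAEm : A * E = 1 - A := by
        have : A * B = A + A * E := by rw [hBdef, mul_add, mul_one]
        rw [hAB] at this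
        linear_combination (norm := abel) this.symm
      have h1 : A *ᵥ (E *ᵥ x) = x - A *ᵥ x := by
        rw [mulVec_mulVec, hAEm, sub_mulVec, one_mulVec]
      calc x ⬝ᵥ (A *ᵥ x) - x ⬝ᵥ x
          = -(x ⬝ᵥ (A *ᵥ (E *ᵥ x))) := by rw [h1, dotProduct_sub]; ring
        _ = -((A *ᵥ x) ⬝ᵥ (E *ᵥ x)) := by rw [aux_symm_dot hAsymm]
    rw [hAE, abs_neg]
    apply aux_abs_of_sq
    · have h2 := aux_dot_sq (A *ᵥ x) (E *ᵥ x)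
      have h3 := hAxq x
      have h4 := hEq x
      have h5 := aux_dot_nonneg x
      have h6 := aux_dot_nonneg (E *ᵥ x)
      have h7 := aux_dot_nonneg (A *ᵥ x)
      have h8 : ((A *ᵥ x) ⬝ᵥ (A *ᵥ x)) * ((E *ᵥ x) ⬝ᵥ (E *ᵥ x))
          ≤ (4 * (x ⬝ᵥ x)) * (((k:ℝ)*ε)^2 * (x ⬝ᵥ x)) :=
        mul_le_mul h3 h4 h6 (by linarith)
      exact aux_prod_sq h2 h8
    · exact mul_nonneg (mul_nonneg (by norm_num) (mul_nonneg (Nat.cast_nonneg k) hε.le)) (aux_dot_nonneg x)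
  -- determinant bounds
  obtain ⟨hdetlo, hdethi⟩ := aux_det_range hBherm hBlo hBhi
  have hdetdiff : |B.det - 1| ≤ (k.factorial:ℝ) * ε := by
    rw [hBdef]; exact aux_det_diff hε.le hε1 hEdiag hEbnd
  set s := Real.sqrt B.det with hsdef
  have hs0 : 0 < s := Real.sqrt_pos.2 hdet_pos
  have hs2 : s^2 = B.det := Real.sq_sqrt hdet_pos.le
  have hslo : ((1:ℝ)/2)^k ≤ s := by
    rw [hsdef]
    rw [show ((1:ℝ)/2)^k = Real.sqrt (((1:ℝ)/2)^k * ((1:ℝ)/2)^k) by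
      rw [Real.sqrt_mul_self (by positivity)]]
    apply Real.sqrt_le_sqrt
    have hp1 := pow_pos (show (0:ℝ) < 1/2 by norm_num) k
    have hp2 := pow_le_one₀ (show (0:ℝ) ≤ 1/2 by norm_num)
      (show ((1:ℝ)/2) ≤ 1 by norm_num) (n := k)
    nlinarith [hdetlo, hp1, hp2]
  have hsinv : |s⁻¹ - 1| ≤ c1 * ε := by
    have h1 : |s - 1| ≤ (k.factorial:ℝ) * ε := by
      have hfac : (s - 1) * (s + 1) = B.det - 1 := by rw [← hs2]; ring
      have h2 : |s - 1| ≤ |s - 1| * (s + 1) := by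
        nlinarith [abs_nonneg (s-1), hs0]
      have h3 : |s - 1| * (s + 1) = |B.det - 1| := by
        rw [← hfac, abs_mul, abs_of_pos (by linarith : (0:ℝ) < s + 1)]
      linarith [hdetdiff]
    have h2 : s⁻¹ - 1 = (1 - s)/s := by field_simp
    rw [h2, abs_div, abs_of_pos hs0, div_le_iff₀ hs0]
    have h5 : (2:ℝ)^k * ((1:ℝ)/2)^k = 1 := by
      rw [← mul_pow]; norm_num
    have h6 : |1 - s| ≤ (k.factorial:ℝ) * ε := by rw [abs_sub_comm]; exact h1
    have h7 : c1 * ε * s ≥ (k.factorial:ℝ) * ε := by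
      have h8 : c1 * ε * s ≥ c1 * ε * ((1:ℝ)/2)^k :=
        mul_le_mul_of_nonneg_left hslo (by positivity)
      calc c1 * ε * s ≥ c1 * ε * ((1:ℝ)/2)^k := h8
        _ = (k.factorial:ℝ) * ε * ((2:ℝ)^k * ((1:ℝ)/2)^k) := by rw [hc1]; ring
        _ = (k.factorial:ℝ) * ε := by rw [h5, mul_one]
    linarith
  -- density formulas
  have hπ : (0:ℝ) ≤ (2*Real.pi)^k := by positivity
  set P := Real.sqrt ((2*Real.pi)^k) with hPdef
  have hP1 : 1 ≤ P := by
    rw [hPdef, show (1:ℝ) = Real.sqrt 1 by rw [Real.sqrt_one]]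
    apply Real.sqrt_le_sqrt
    apply one_le_pow₀
    nlinarith [Real.pi_gt_three]
  have hP0 : 0 < P := lt_of_lt_of_le one_pos hP1
  have hdots : ∀ (M : Matrix (Fin k) (Fin k) ℝ) (x : Fin k → ℝ),
      x ⬝ᵥ (M *ᵥ x) = ∑ i, ∑ j, x i * M i j * x j := by
    intro M x
    simp [dotProduct, mulVec, Finset.mul_sum, mul_assoc]
  have hgB : ∀ x : Fin k → ℝ,
      gaussDensity k (1 + E) x = (P * s)⁻¹ * Real.exp (-(x ⬝ᵥ (A *ᵥ x)/2)) := by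
    intro x
    unfold gaussDensity
    rw [← hBdef]
    have h1 : Real.sqrt ((2*Real.pi)^k * B.det) = P * s := by
      rw [Real.sqrt_mul hπ, hPdef, hsdef]
    have h2 : -(∑ i, ∑ j, x i * B⁻¹ i j * x j)/2 = -(x ⬝ᵥ (A *ᵥ x)/2) := by
      rw [← hAdef, ← hdots A x, neg_div]
    rw [h1, h2]
  have hg1 : ∀ x : Fin k → ℝ,
      gaussDensity k 1 x = P⁻¹ * Real.exp (-(x ⬝ᵥ x/2)) := by
    intro x
    unfold gaussDensity
    have h1 : Real.sqrt ((2*Real.pi)^k * (1 : Matrix (Fin k) (Fin k) ℝ).det) = P := by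
      rw [det_one, mul_one, hPdef]
    have h2 : -(∑ i, ∑ j, x i * (1 : Matrix (Fin k) (Fin k) ℝ)⁻¹ i j * x j)/2
        = -(x ⬝ᵥ x/2) := by
      rw [inv_one, ← hdots 1 x, one_mulVec, neg_div]
    rw [h1, h2]
  have hPinv : P⁻¹ ≤ 1 := by
    rw [inv_le_one₀ hP0]
    exact hP1
  -- pointwise bound
  have hpt : ∀ x : Fin k → ℝ,
      |gaussDensity k (1 + E) x - gaussDensity k 1 x|
        ≤ ε * D * Real.exp (-(1/6) * (x ⬝ᵥ x)) := by
    intro x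
    have hq := aux_dot_nonneg x
    have hQlo := hQAlo x
    have hQd := hQAdiff x
    rw [hgB x, hg1 x]
    set e6 := Real.exp (-(1/6) * (x ⬝ᵥ x)) with he6
    set e3 := Real.exp (-(1/3) * (x ⬝ᵥ x)) with he3d
    set eA := Real.exp (-(x ⬝ᵥ (A *ᵥ x)/2)) with heAd
    set e1 := Real.exp (-(x ⬝ᵥ x/2)) with he1d
    have he6pos : 0 < e6 := Real.exp_pos _
    have heApos : 0 < eA := Real.exp_pos _
    have he6le : e6 ≤ 1 := by
      rw [he6]
      have h00 : Real.exp (-(1/6) * (x ⬝ᵥ x)) ≤ Real.exp 0 :=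
        Real.exp_le_exp.2 (by linarith only [hq])
      simpa using h00
    have he3 : e3 = e6 * e6 := by
      rw [he3d, he6, ← Real.exp_add]
      congr 1
      ring
    have heA3 : eA ≤ e3 := by
      rw [heAd, he3d]
      exact Real.exp_le_exp.2 (by linarith only [hQlo, hq])
    have he2 : |eA - e1| ≤ ((k:ℝ)*ε*(x ⬝ᵥ x)) * e3 := by
      have hd := aux_exp_diff (a := x ⬝ᵥ (A *ᵥ x)/2) (b := x ⬝ᵥ x/2)
        (m := (1/3) * (x ⬝ᵥ x)) (by linarith only [hQlo, hq]) (by linarith only [hq])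
      rw [← neg_mul] at hd
      rw [heAd, he1d, he3d]
      refine le_trans hd ?_
      apply mul_le_mul_of_nonneg_right _ (Real.exp_pos _).le
      rw [abs_le] at hQd ⊢
      constructor
      · linarith only [hQd.1, hQd.2]
      · linarith only [hQd.1, hQd.2]
    have hq6 : (x ⬝ᵥ x) * e6 ≤ 6 := by
      have h1 := Real.add_one_le_exp ((1/6) * (x ⬝ᵥ x))
      have h2 : Real.exp ((1/6) * (x ⬝ᵥ x)) * e6 = 1 := by
        rw [he6, ← Real.exp_add, show (1/6) * (x ⬝ᵥ x) + -(1/6) * (x ⬝ᵥ x) = 0 by ring,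
          Real.exp_zero]
      linarith only [mul_le_mul_of_nonneg_right h1 he6pos.le, h2, he6pos]
    have hsplit : (P * s)⁻¹ * eA - P⁻¹ * e1
        = P⁻¹ * ((s⁻¹ - 1) * eA + (eA - e1)) := by
      rw [mul_inv]
      ring
    rw [hsplit, abs_mul, abs_of_pos (inv_pos.2 hP0)]
    have habs2 : |(s⁻¹ - 1) * eA + (eA - e1)| ≤ |s⁻¹ - 1| * eA + |eA - e1| := by
      calc |(s⁻¹ - 1) * eA + (eA - e1)| ≤ |(s⁻¹ - 1) * eA| + |eA - e1| := abs_add_le _ _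
        _ = |s⁻¹ - 1| * eA + |eA - e1| := by rw [abs_mul, abs_of_pos heApos]
    calc P⁻¹ * |(s⁻¹ - 1) * eA + (eA - e1)|
        ≤ 1 * (|s⁻¹ - 1| * eA + |eA - e1|) :=
          mul_le_mul hPinv habs2 (abs_nonneg _) one_pos.le
      _ = |s⁻¹ - 1| * eA + |eA - e1| := one_mul _
      _ ≤ (c1 * ε) * e3 + ((k:ℝ)*ε*(x ⬝ᵥ x)) * e3 := by
          refine add_le_add ?_ he2
          exact mul_le_mul hsinv heA3 heApos.le (mul_nonneg hc10.le hε.le)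
      _ ≤ ε * D * e6 := by
          rw [he3]
          have hke : (0:ℝ) ≤ (k:ℝ)*ε := mul_nonneg (Nat.cast_nonneg k) hε.le
          have t1 : c1*ε*(e6*e6) ≤ c1*ε*e6 := by
            have h10 := mul_le_mul_of_nonneg_left he6le
              (mul_nonneg (mul_nonneg hc10.le hε.le) he6pos.le)
            linarith only [h10]
          have t2 : (k:ℝ)*ε*(x ⬝ᵥ x)*(e6*e6) ≤ 6*((k:ℝ)*ε)*e6 := by
            have h9 : (0:ℝ) ≤ (k:ℝ)*ε*e6 := mul_nonneg hke he6pos.le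
            linarith only [mul_le_mul_of_nonneg_left hq6 h9]
          have hDe : ε * D * e6 = c1*ε*e6 + 6*((k:ℝ)*ε)*e6 := by
            rw [hDdef]
            ring
          rw [hDe]
          linarith only [t1, t2]
  -- integrability
  have hcont : ∀ M : Matrix (Fin k) (Fin k) ℝ, Continuous (gaussDensity k M) := by
    intro M
    unfold gaussDensity
    fun_prop
  have hintB : Integrable (gaussDensity k (1+E)) := by
    refine Integrable.mono'
      ((aux_gauss_int (show (0:ℝ) < 1/3 by norm_num)).const_mul ((2:ℝ)^k))
      (hcont _).aestronglyMeasurable ?_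
    filter_upwards with x
    rw [Real.norm_eq_abs, hgB x, abs_of_nonneg (by positivity)]
    have hPs : ((1:ℝ)/2)^k ≤ P * s := by
      have h0 : (1:ℝ) * ((1:ℝ)/2)^k ≤ P * s :=
        mul_le_mul hP1 hslo (pow_pos (by norm_num) k).le (by linarith only [hP1])
      linarith only [h0]
    have h1 : (P*s)⁻¹ ≤ 2^k := by
      have h2 : (P*s)⁻¹ ≤ (((1:ℝ)/2)^k)⁻¹ :=
        inv_anti₀ (pow_pos (by norm_num) k) hPs
      have h3 : (((1:ℝ)/2)^k)⁻¹ = 2^k := by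
        rw [← inv_pow]
        norm_num
      linarith [h3 ▸ h2]
    have h2 : Real.exp (-(x ⬝ᵥ (A *ᵥ x)/2)) ≤ Real.exp (-(1/3) * (x ⬝ᵥ x)) :=
      Real.exp_le_exp.2 (by linarith only [hQAlo x, aux_dot_nonneg x])
    exact mul_le_mul h1 h2 (Real.exp_pos _).le (by positivity)
  have hint1 : Integrable (gaussDensity k 1) := by
    refine Integrable.mono' (aux_gauss_int (show (0:ℝ) < 1/2 by norm_num))
      (hcont _).aestronglyMeasurable ?_
    filter_upwards with x
    rw [Real.norm_eq_abs, hg1 x, abs_of_nonneg (by positivity)]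
    have h0 : Real.exp (-(x ⬝ᵥ x/2)) = Real.exp (-(1/2) * (x ⬝ᵥ x)) := by
      congr 1
      ring
    rw [h0]
    calc P⁻¹ * Real.exp (-(1/2) * (x ⬝ᵥ x)) ≤ 1 * Real.exp (-(1/2) * (x ⬝ᵥ x)) :=
          mul_le_mul_of_nonneg_right hPinv (Real.exp_pos _).le
      _ = Real.exp (-(1/2) * (x ⬝ᵥ x)) := one_mul _
  have hintsub : Integrable (fun x => gaussDensity k (1+E) x - gaussDensity k 1 x) :=
    hintB.sub hint1
  have hintbnd : Integrable (fun x : Fin k → ℝ => ε * D * Real.exp (-(1/6) * (x ⬝ᵥ x))) :=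
    (aux_gauss_int (show (0:ℝ) < 1/6 by norm_num)).const_mul _
  rw [hBdef]
  calc |(∫ x in S, gaussDensity k (1+E) x) - ∫ x in S, gaussDensity k 1 x|
      = |∫ x in S, (gaussDensity k (1+E) x - gaussDensity k 1 x)| := by
        rw [integral_sub hintB.integrableOn hint1.integrableOn]
    _ ≤ ∫ x in S, |gaussDensity k (1+E) x - gaussDensity k 1 x| := by
        have hni := norm_integral_le_integral_norm (μ := volume.restrict S)
          (f := fun x => gaussDensity k (1+E) x - gaussDensity k 1 x)
        simpa [Real.norm_eq_abs] using hni
    _ ≤ ∫ x, |gaussDensity k (1+E) x - gaussDensity k 1 x| := by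
        apply setIntegral_le_integral hintsub.abs
        filter_upwards with x using abs_nonneg _
    _ ≤ ∫ x, ε * D * Real.exp (-(1/6) * (x ⬝ᵥ x)) :=
        integral_mono hintsub.abs hintbnd hpt
    _ = ε * D * J := by
        rw [hJdef, integral_const_mul]
    _ ≤ (1 + D * J) * ε := by
        have h : (1 + D * J) * ε - ε * D * J = ε := by ring
        linarith
end
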